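/- Let S_n be the (n+1)×(n+1) Kac matrix, with subdiagonal entries a_i = i and superdiagonal entries b_i = n+1−i (1 ≤ i ≤ n) and zeros elsewhere. Then for every integer d with 0 ≤ d ≤ n, n − 2d is an eigenvalue of S_n. -/

import Mathlib

open Polynomial Finset

/-- The `(n+1) × (n+1)` Kac matrix: subdiagonal entries `1, 2, ..., n`
(the `(i+1, i)` entry is `i`), superdiagonal entries `n, n-1, ..., 1`
(the `(i, i+1)` entry is `n + 1 - i`), and zeros elsewhere. -/
def kacMatrix (n : ℕ) : Matrix (Fin (n + 1)) (Fin (n + 1)) ℝ :=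
  Matrix.of fun i j =>
    if (i : ℕ) = (j : ℕ) + 1 then (i : ℝ)
    else if (j : ℕ) = (i : ℕ) + 1 then (n : ℝ) + 1 - (j : ℝ)
    else 0

private lemma deriv_one_sub (a : ℕ) :
    (1 - X : ℝ[X]) * derivative ((1 - X) ^ a) = -(C (a : ℝ)) * (1 - X) ^ a := by
  cases a with
  | zero => simp
  | succ a =>
      rw [derivative_pow]
      simp only [derivative_sub, derivative_one, derivative_X, zero_sub, Nat.add_sub_cancel,
        Nat.cast_add, Nat.cast_one, map_add, map_one]
      ring

private lemma deriv_one_add (b : ℕ) :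
    (1 + X : ℝ[X]) * derivative ((1 + X) ^ b) = C (b : ℝ) * (1 + X) ^ b := by
  cases b with
  | zero => simp
  | succ b =>
      rw [derivative_pow]
      simp only [derivative_add, derivative_one, derivative_X, zero_add, Nat.add_sub_cancel,
        Nat.cast_add, Nat.cast_one, map_add, map_one]
      ring

private lemma kac_poly_id (a b : ℕ) :
    (1 - X ^ 2 : ℝ[X]) * derivative ((1 - X) ^ a * (1 + X) ^ b)
      = (C ((b : ℝ) - a) - C ((a : ℝ) + b) * X) * ((1 - X) ^ a * (1 + X) ^ b) := by
  have h1 := deriv_one_sub a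
  have h2 := deriv_one_add b
  rw [derivative_mul, map_sub, map_add]
  linear_combination ((1 + X : ℝ[X]) ^ b * (1 + X)) * h1 + ((1 - X : ℝ[X]) ^ a * (1 - X)) * h2

private lemma kac_coeff_A (a b : ℕ) :
    ((1 - X : ℝ[X]) ^ a * (1 + X) ^ b).coeff 1
      = ((b : ℝ) - a) * ((1 - X : ℝ[X]) ^ a * (1 + X) ^ b).coeff 0 := by
  have h := congrArg (fun q : ℝ[X] => q.coeff 0) (kac_poly_id a b)
  simp only [sub_mul, one_mul, coeff_sub, coeff_derivative] at h
  rw [show ((X:ℝ[X])^2 * derivative ((1 - X) ^ a * (1 + X) ^ b)) = (derivative ((1 - X) ^ a * (1 + X) ^ b)) * X^2 from mul_comm _ _] at h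
  have hx : (X * ((1 - X : ℝ[X]) ^ a * (1 + X) ^ b)).coeff 0 = 0 := by simp
  rw [coeff_mul_X_pow', if_neg (by omega), mul_assoc, coeff_C_mul, coeff_C_mul, hx] at h
  push_cast at h ⊢
  linarith [h]

private lemma kac_coeff_B (a b k : ℕ) :
    ((k : ℝ) + 2) * ((1 - X : ℝ[X]) ^ a * (1 + X) ^ b).coeff (k + 2)
      + (((a : ℝ) + b) - k) * ((1 - X : ℝ[X]) ^ a * (1 + X) ^ b).coeff k
      = ((b : ℝ) - a) * ((1 - X : ℝ[X]) ^ a * (1 + X) ^ b).coeff (k + 1) := by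
  have h := congrArg (fun q : ℝ[X] => q.coeff (k + 1)) (kac_poly_id a b)
  simp only [sub_mul, one_mul, coeff_sub, coeff_derivative] at h
  rw [show ((X:ℝ[X])^2 * derivative ((1 - X) ^ a * (1 + X) ^ b)) = (derivative ((1 - X) ^ a * (1 + X) ^ b)) * X^2 from mul_comm _ _] at h
  rw [coeff_mul_X_pow', mul_assoc, coeff_C_mul, coeff_C_mul, coeff_X_mul] at h
  rcases k with _ | j
  · rw [if_neg (by omega)] at h
    push_cast at h ⊢
    linarith [h]
  · rw [if_pos (by omega : 2 ≤ j + 1 + 1)] at h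
    simp only [show j + 1 + 1 - 2 = j from by omega, coeff_derivative] at h
    push_cast at h ⊢
    linarith [h]

private noncomputable def kacW (n d : ℕ) (k : ℕ) : ℝ :=
  (k.factorial : ℝ) * ((n - k).factorial : ℝ)
    * ((1 - X : ℝ[X]) ^ d * (1 + X) ^ (n - d)).coeff k

private lemma kac_coeff_top (n d : ℕ) (hd : d ≤ n) {k : ℕ} (hk : n < k) :
    ((1 - X : ℝ[X]) ^ d * (1 + X) ^ (n - d)).coeff k = 0 := by
  apply coeff_eq_zero_of_natDegree_lt
  have h0 : (1 - X : ℝ[X]).natDegree ≤ 1 := (natDegree_sub_le _ _).trans (by simp)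
  have h0' : (1 + X : ℝ[X]).natDegree ≤ 1 := (natDegree_add_le _ _).trans (by simp)
  have h1 : ((1 - X : ℝ[X]) ^ d).natDegree ≤ d :=
    natDegree_pow_le.trans (by nlinarith)
  have h2 : ((1 + X : ℝ[X]) ^ (n - d)).natDegree ≤ n - d :=
    natDegree_pow_le.trans (by nlinarith [Nat.sub_le n d])
  have := natDegree_mul_le (p := (1 - X : ℝ[X]) ^ d) (q := (1 + X : ℝ[X]) ^ (n - d))
  omega

private lemma kac_rec (n d : ℕ) (hd : d ≤ n) (i : ℕ) (hi : i ≤ n) :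
    (i : ℝ) * kacW n d (i - 1) + ((n : ℝ) - i) * kacW n d (i + 1)
      = ((n : ℝ) - 2 * d) * kacW n d i := by
  have hb : ((n - d : ℕ) : ℝ) = (n : ℝ) - d := Nat.cast_sub hd
  rcases i with _ | k
  · -- i = 0
    rcases Nat.eq_zero_or_pos n with hn | hn
    · subst hn
      interval_cases d
      simp [kacW, coeff_one]
    · have hA := kac_coeff_A d (n - d)
      rw [hb] at hA
      have hf : (n : ℝ) * ((n - 1).factorial : ℝ) = (n.factorial : ℝ) := by
        rw_mod_cast [Nat.mul_factorial_pred hn.ne']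
      simp only [kacW, Nat.zero_sub, Nat.sub_zero, Nat.factorial_zero, Nat.factorial_one,
        Nat.cast_zero, Nat.cast_one, zero_add]
      linear_combination ((n : ℝ) * ((n-1).factorial : ℝ)) * hA
        + (((n:ℝ) - 2*d) * ((1 - X : ℝ[X]) ^ d * (1 + X) ^ (n - d)).coeff 0) * hf
  · -- i = k + 1
    have hB := kac_coeff_B d (n - d) k
    rw [hb] at hB
    simp only [kacW, Nat.add_sub_cancel]
    rw [show k + 1 + 1 = k + 2 from rfl]
    rcases Nat.lt_or_ge (k + 1) n with hlt | hge
    · -- k + 2 ≤ n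
      obtain ⟨j, hj⟩ : ∃ j, n = k + 2 + j := ⟨n - (k + 2), by omega⟩
      have hnr : (n : ℝ) = (k : ℝ) + 2 + j := by rw [hj]; push_cast; ring
      rw [show n - k = j + 2 from by omega, show n - (k+1) = j + 1 from by omega,
        show n - (k+2) = j from by omega, hnr]
      rw [hnr] at hB
      have f1 : ((k+1).factorial : ℝ) = ((k:ℝ)+1) * (k.factorial : ℝ) := by
        push_cast [Nat.factorial_succ]; ring
      have f2 : ((k+2).factorial : ℝ) = ((k:ℝ)+2) * ((k+1).factorial : ℝ) := by
        push_cast [Nat.factorial_succ]; ring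
      have f3 : ((j+1).factorial : ℝ) = ((j:ℝ)+1) * (j.factorial : ℝ) := by
        push_cast [Nat.factorial_succ]; ring
      have f4 : ((j+2).factorial : ℝ) = ((j:ℝ)+2) * ((j+1).factorial : ℝ) := by
        push_cast [Nat.factorial_succ]; ring
      rw [f4, f3, f2, f1]
      push_cast
      linear_combination (((k:ℝ)+1) * ((j:ℝ)+1) * (k.factorial : ℝ) * (j.factorial : ℝ)) * hB
    · -- k + 1 = n
      have hn : n = k + 1 := by omega
      have htop : ((1 - X : ℝ[X]) ^ d * (1 + X) ^ (n - d)).coeff (k + 2) = 0 :=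
        kac_coeff_top n d hd (by omega)
      have hnr : (n : ℝ) = (k : ℝ) + 1 := by rw [hn]; push_cast; ring
      rw [show n - k = 1 from by omega, show n - (k+1) = 0 from by omega,
        show n - (k+2) = 0 from by omega, hnr, htop]
      rw [hnr, htop] at hB
      have f1 : ((k+1).factorial : ℝ) = ((k:ℝ)+1) * (k.factorial : ℝ) := by
        push_cast [Nat.factorial_succ]; ring
      rw [f1]
      simp only [Nat.factorial_zero, Nat.factorial_one, Nat.cast_one]
      push_cast
      linear_combination (((k:ℝ)+1) * (k.factorial : ℝ)) * hB

private lemma kac_mulVec (n d : ℕ) (i : Fin (n + 1)) :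
    (kacMatrix n).mulVec (fun j => kacW n d j) i
      = ((i : ℕ) : ℝ) * kacW n d ((i : ℕ) - 1)
        + ((n : ℝ) - ((i : ℕ) : ℝ)) * kacW n d ((i : ℕ) + 1) := by
  have hsplit : ∀ j : Fin (n + 1), kacMatrix n i j * kacW n d (j : ℕ)
      = (if ((i : ℕ)) = (j : ℕ) + 1 then ((i : ℕ) : ℝ) * kacW n d (j : ℕ) else 0)
        + (if ((j : ℕ)) = (i : ℕ) + 1 then ((n : ℝ) + 1 - ((j : ℕ) : ℝ)) * kacW n d (j : ℕ)
            else 0) := by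
    intro j
    simp only [kacMatrix, Matrix.of_apply]
    split_ifs with h1 h2 <;> first
      | omega
      | push_cast; ring
  have : (kacMatrix n).mulVec (fun j => kacW n d j) i
      = ∑ j : Fin (n + 1), kacMatrix n i j * kacW n d (j : ℕ) := by
    simp [Matrix.mulVec, dotProduct]
  rw [this, Finset.sum_congr rfl fun j _ => hsplit j, Finset.sum_add_distrib]
  rw [Fin.sum_univ_eq_sum_range
      (fun j => if ((i : ℕ)) = j + 1 then ((i : ℕ) : ℝ) * kacW n d j else 0),
    Fin.sum_univ_eq_sum_range
      (fun j => if j = (i : ℕ) + 1 then ((n : ℝ) + 1 - (j : ℝ)) * kacW n d j else 0)]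
  congr 1
  · rcases hi0 : (i : ℕ) with _ | m
    · rw [Finset.sum_eq_zero (fun j _ => by simp)]
      simp
    · rw [Finset.sum_congr rfl (fun j _ =>
          if_congr (show (m + 1 = j + 1) ↔ j = m from by omega) rfl rfl),
        Finset.sum_ite_eq' (Finset.range (n + 1)) m
          (fun j => ((m + 1 : ℕ) : ℝ) * kacW n d j)]
      rw [if_pos (Finset.mem_range.mpr (by omega))]
      simp
  · rw [Finset.sum_ite_eq' (Finset.range (n + 1)) ((i : ℕ) + 1)
      (fun j => ((n : ℝ) + 1 - (j : ℝ)) * kacW n d j)]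
    rcases Nat.lt_or_ge ((i : ℕ) + 1) (n + 1) with h | h
    · rw [if_pos (Finset.mem_range.mpr h)]
      push_cast
      ring
    · rw [if_neg (by simp; omega)]
      have : ((i : ℕ) : ℝ) = (n : ℝ) := by
        have : (i : ℕ) = n := by omega
        rw [this]
      rw [this]
      ring

theorem kac_has_eigenvalue (n : ℕ) (d : ℕ) (hd : d ≤ n) :
    ∃ v : Fin (n + 1) → ℝ, v ≠ 0 ∧
      (kacMatrix n).mulVec v = ((n : ℝ) - 2 * d) • v := by
  refine ⟨fun i => kacW n d i, ?_, ?_⟩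
  · intro h
    have h0 := congrFun h ⟨0, Nat.succ_pos n⟩
    have hc0 : ((1 - X : ℝ[X]) ^ d * (1 + X) ^ (n - d)).coeff 0 = 1 := by
      simp [coeff_zero_eq_eval_zero]
    simp only [kacW, Fin.val_mk, Nat.sub_zero, Nat.factorial_zero, Nat.cast_one, one_mul,
      hc0, mul_one, Pi.zero_apply] at h0
    exact (Nat.cast_ne_zero.mpr n.factorial_ne_zero) h0
  · funext i
    rw [kac_mulVec n d i, kac_rec n d hd (i : ℕ) (Fin.is_le i)]
    simp [kacW]
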